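/- arXiv:2409.02764 — 5 statements merged into one kernel-verified Lean document; each statement's English description precedes it below -/
import Mathlib

section
/- Let k₁ > 0, q₀ > 0, γ > 0 and m₀ > 0. Define m : ℝ → ℝ by m(t) = (−1 + k₁q₀m₀t + γm₀² + √(4γm₀² + (k₁tq₀m₀ + γm₀² − 1)²)) / (2γm₀). Then m(0) = m₀, m(t) > 0 for all t ≥ 0, and m is differentiable with m′(t) = k₁q₀ m(t)² / (1 + γ m(t)²) for all t ≥ 0. -/
/-- Explicit solution of `m' = k₁ q₀ m² / (1 + γ m²)` on the invariant plane `s = 0`. -/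
theorem stmt0 (k₁ q₀ γ m₀ : ℝ) (hk₁ : 0 < k₁) (hq₀ : 0 < q₀) (hγ : 0 < γ) (hm₀ : 0 < m₀)
    (m : ℝ → ℝ)
    (hm : m = fun t => (-1 + k₁*q₀*m₀*t + γ*m₀^2 +
      Real.sqrt (4*γ*m₀^2 + (k₁*t*q₀*m₀ + γ*m₀^2 - 1)^2)) / (2*γ*m₀)) :
    m 0 = m₀ ∧ (∀ t ≥ 0, 0 < m t) ∧
    (∀ t ≥ 0, HasDerivAt m (k₁*q₀*(m t)^2 / (1 + γ*(m t)^2)) t) := by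
  subst hm
  have key : ∀ t : ℝ,
      (Real.sqrt (4*γ*m₀^2 + (k₁*t*q₀*m₀ + γ*m₀^2 - 1)^2))^2
        = 4*γ*m₀^2 + (k₁*t*q₀*m₀ + γ*m₀^2 - 1)^2 ∧
      0 < Real.sqrt (4*γ*m₀^2 + (k₁*t*q₀*m₀ + γ*m₀^2 - 1)^2) ∧
      0 < Real.sqrt (4*γ*m₀^2 + (k₁*t*q₀*m₀ + γ*m₀^2 - 1)^2)
        + (k₁*t*q₀*m₀ + γ*m₀^2 - 1) := by
    intro t
    set u := k₁*t*q₀*m₀ + γ*m₀^2 - 1 with hu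
    have hR : (0:ℝ) < 4*γ*m₀^2 + u^2 := by positivity
    have hs : (Real.sqrt (4*γ*m₀^2 + u^2))^2 = 4*γ*m₀^2 + u^2 := Real.sq_sqrt hR.le
    have hs0 : 0 < Real.sqrt (4*γ*m₀^2 + u^2) := Real.sqrt_pos.mpr hR
    have habs : |u| < Real.sqrt (4*γ*m₀^2 + u^2) := by
      have := Real.sqrt_lt_sqrt (sq_nonneg u) (by nlinarith [mul_pos hγ (pow_pos hm₀ 2)] : u^2 < 4*γ*m₀^2 + u^2)
      rwa [Real.sqrt_sq_eq_abs] at this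
    have hnu : -|u| ≤ u := neg_abs_le u
    exact ⟨hs, hs0, by linarith⟩
  refine ⟨?_, ?_, ?_⟩
  · show (-1 + k₁*q₀*m₀*0 + γ*m₀^2 +
      Real.sqrt (4*γ*m₀^2 + (k₁*0*q₀*m₀ + γ*m₀^2 - 1)^2)) / (2*γ*m₀) = m₀
    rw [show 4*γ*m₀^2 + (k₁*0*q₀*m₀ + γ*m₀^2 - 1)^2 = (γ*m₀^2 + 1)^2 by ring,
      Real.sqrt_sq (by positivity)]
    field_simp
    ring
  · intro t _
    obtain ⟨hs, hs0, hsu⟩ := key t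
    show 0 < (-1 + k₁*q₀*m₀*t + γ*m₀^2 +
      Real.sqrt (4*γ*m₀^2 + (k₁*t*q₀*m₀ + γ*m₀^2 - 1)^2)) / (2*γ*m₀)
    apply div_pos _ (by positivity)
    nlinarith [hsu]
  · intro t _
    obtain ⟨hs, hs0, hsu⟩ := key t
    set u := k₁*t*q₀*m₀ + γ*m₀^2 - 1 with hu
    set s := Real.sqrt (4*γ*m₀^2 + u^2) with hsdef
    have hR : (0:ℝ) < 4*γ*m₀^2 + u^2 := by positivity
    have hinner : HasDerivAt (fun x : ℝ => 4*γ*m₀^2 + (k₁*x*q₀*m₀ + γ*m₀^2 - 1)^2)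
        (2*u*(k₁*q₀*m₀)) t := by
      have h1 : HasDerivAt (fun x : ℝ => k₁*x*q₀*m₀ + γ*m₀^2 - 1) (k₁*q₀*m₀) t := by
        have h2 := ((((hasDerivAt_id t).const_mul k₁).mul_const q₀).mul_const m₀).add_const
          (γ*m₀^2)
        have h3 := h2.sub_const 1
        refine h3.congr_deriv ?_
        ring
      have h4 := (h1.pow 2).const_add (4*γ*m₀^2)
      refine h4.congr_deriv ?_
      rw [hu]
      ring
    have hsqrt : HasDerivAt (fun x : ℝ =>
        Real.sqrt (4*γ*m₀^2 + (k₁*x*q₀*m₀ + γ*m₀^2 - 1)^2))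
        (2*u*(k₁*q₀*m₀) / (2*s)) t := by
      have h5 := (Real.hasDerivAt_sqrt hR.ne').comp t hinner
      refine h5.congr_deriv ?_
      rw [← hsdef]
      field_simp
    have hlin : HasDerivAt (fun x : ℝ => -1 + k₁*q₀*m₀*x + γ*m₀^2) (k₁*q₀*m₀) t := by
      have h6 := (((hasDerivAt_id t).const_mul (k₁*q₀*m₀)).const_add (-1)).add_const (γ*m₀^2)
      refine h6.congr_deriv ?_
      ring
    have hD := (hlin.add hsqrt).div_const (2*γ*m₀)
    refine hD.congr_deriv (Eq.symm ?_)
    have hmt : (-1 + k₁*q₀*m₀*t + γ*m₀^2 + s) = u + s := by rw [hu]; ring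
    show k₁*q₀*((-1 + k₁*q₀*m₀*t + γ*m₀^2 + s)/(2*γ*m₀))^2 /
        (1 + γ*((-1 + k₁*q₀*m₀*t + γ*m₀^2 + s)/(2*γ*m₀))^2)
        = (k₁*q₀*m₀ + 2*u*(k₁*q₀*m₀)/(2*s))/(2*γ*m₀)
    rw [hmt]
    have hden : 1 + γ*((u + s)/(2*γ*m₀))^2 = s*(s+u)/(2*γ*m₀^2) := by
      field_simp
      linear_combination (-1) * hs
    rw [hden]
    have h1 : s ≠ 0 := hs0.ne'
    have h2 : s + u ≠ 0 := by linarith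
    field_simp
    ring
end

section
/- Let x, y > 0 satisfy y³ > 2x⁵ and 2x³ > y², and set b* = (−2x⁵ + y³)/(2x⁵) and K* = (2x³ − y²)/(x²y²), so b*, K* > 0. Then the Jacobian matrix at (x,y) of the vector field X(x,y) = (x²/((1+K*x²)y) + α − b*x, x² + αε − y) (for any constants α, ε) equals M = [[1, −1/(2x)], [2x, −1]]. Moreover M·M = 0 and M ≠ 0, i.e., M is a nonzero nilpotent matrix with double zero eigenvalue; its kernel is spanned by v₁ = (1/(2x), 1)ᵗ, and v₂ = (1, 2x−1)ᵗ satisfies M v₂ = v₁, so the zero eigenvalue has geometric multiplicity one. -/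
/-- At the Bogdanov–Takens parameter values `b*`, `K*`, the Jacobian of `X` at `(x,y)`
is the nonzero nilpotent matrix `M = [[1, −1/(2x)],[2x, −1]]` with double zero eigenvalue
of geometric multiplicity one. -/
theorem stmt13 (x y α ε : ℝ) (hx : 0 < x) (hy : 0 < y)
    (h1 : 2*x^5 < y^3) (h2 : y^2 < 2*x^3)
    (bs Ks : ℝ) (hbs : bs = (-2*x^5 + y^3)/(2*x^5)) (hKs : Ks = (2*x^3 - y^2)/(x^2*y^2))
    (X : ℝ × ℝ → ℝ × ℝ)
    (hX : X = fun p => (p.1^2/((1+Ks*p.1^2)*p.2) + α - bs*p.1, p.1^2 + α*ε - p.2))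
    (M : Matrix (Fin 2) (Fin 2) ℝ) (hM : M = !![1, -1/(2*x); 2*x, -1]) :
    0 < bs ∧ 0 < Ks ∧
    (∃ L : ℝ × ℝ →L[ℝ] ℝ × ℝ, HasFDerivAt X L (x, y) ∧
      ∀ p : ℝ × ℝ, L p = (M.mulVec ![p.1, p.2] 0, M.mulVec ![p.1, p.2] 1)) ∧
    M * M = 0 ∧ M ≠ 0 ∧
    M.mulVec ![1/(2*x), 1] = 0 ∧
    (∀ w : Fin 2 → ℝ, M.mulVec w = 0 → ∃ c : ℝ, w = c • ![1/(2*x), 1]) ∧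
    M.mulVec ![1, 2*x - 1] = ![1/(2*x), 1] := by
  have hx0 : x ≠ 0 := ne_of_gt hx
  have hy0 : y ≠ 0 := ne_of_gt hy
  subst hM hX hbs hKs
  have hKx : 1 + (2*x^3 - y^2)/(x^2*y^2) * x^2 = 2*x^3/y^2 := by
    field_simp; ring
  have hv0 : (1 + (2*x^3 - y^2)/(x^2*y^2) * x^2) * y ≠ 0 := by
    rw [hKx]
    positivity
  refine ⟨?_, ?_, ?_, ?_, ?_, ?_, ?_, ?_⟩
  · apply div_pos (by linarith) (by positivity)
  · apply div_pos (by linarith) (by positivity)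
  · -- derivative
    set Ks : ℝ := (2*x^3 - y^2)/(x^2*y^2) with hKs
    set bs : ℝ := (-2*x^5 + y^3)/(2*x^5) with hbs
    have hu : HasFDerivAt (fun p : ℝ × ℝ => p.1 ^ 2)
        (((2:ℕ) * x ^ 1) • ContinuousLinearMap.fst ℝ ℝ ℝ) (x, y) :=
      by
        have h := (hasDerivAt_pow 2 x).comp_hasFDerivAt (x, y)
          (hasFDerivAt_fst : HasFDerivAt (Prod.fst : ℝ × ℝ → ℝ) (ContinuousLinearMap.fst ℝ ℝ ℝ) (x, y))
        exact h
    have hv : HasFDerivAt (fun p : ℝ × ℝ => (1 + Ks * p.1 ^ 2) * p.2)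
        ((1 + Ks * x ^ 2) • ContinuousLinearMap.snd ℝ ℝ ℝ +
          y • (Ks • (((2:ℕ) * x ^ 1) • ContinuousLinearMap.fst ℝ ℝ ℝ))) (x, y) :=
      ((hu.const_mul Ks).const_add 1).mul hasFDerivAt_snd
    have hvinv : HasFDerivAt (fun p : ℝ × ℝ => ((1 + Ks * p.1 ^ 2) * p.2)⁻¹)
        ((-(((1 + Ks * x ^ 2) * y) ^ 2)⁻¹) •
          ((1 + Ks * x ^ 2) • ContinuousLinearMap.snd ℝ ℝ ℝ +
            y • (Ks • (((2:ℕ) * x ^ 1) • ContinuousLinearMap.fst ℝ ℝ ℝ)))) (x, y) :=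
      (hasDerivAt_inv hv0).comp_hasFDerivAt (x, y) hv
    have hfrac := hu.mul hvinv
    have hf1 := (hfrac.add_const α).sub (hasFDerivAt_fst.const_mul bs)
    have hf2 := (hu.add_const (α * ε)).sub hasFDerivAt_snd
    refine ⟨_, by simp only [div_eq_mul_inv]; exact HasFDerivAt.prodMk hf1 hf2, ?_⟩
    intro p
    have h2x3 : 1 + Ks * x ^ 2 = 2*x^3/y^2 := by rw [hKs]; field_simp; ring
    simp only [ContinuousLinearMap.prod_apply, ContinuousLinearMap.add_apply,
      ContinuousLinearMap.sub_apply, ContinuousLinearMap.smul_apply,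
      ContinuousLinearMap.coe_fst', ContinuousLinearMap.coe_snd',
      Matrix.mulVec, dotProduct, Fin.sum_univ_two, Matrix.cons_val',
      Matrix.cons_val_zero, Matrix.cons_val_one, Matrix.head_cons,
      Matrix.empty_val', Matrix.cons_val_fin_one, Matrix.head_fin_const,
      smul_eq_mul, h2x3, hbs, Prod.mk.injEq, Matrix.of_apply]
    constructor
    · field_simp
      ring_nf
      rw [hKs]
      field_simp
      ring
    · ring
  · ext i j
    fin_cases i <;> fin_cases j <;>
      simp [Matrix.mul_apply, Fin.sum_univ_two] <;> field_simp <;> ring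
  · intro h
    have := congrFun (congrFun h 0) 0
    simp at this
  · funext i
    fin_cases i <;>
      simp [Matrix.mulVec, dotProduct, Fin.sum_univ_two] <;> field_simp <;> ring
  · intro w hw
    have h0 := congrFun hw 0
    have h1' := congrFun hw 1
    simp [Matrix.mulVec, dotProduct, Fin.sum_univ_two] at h0 h1'
    refine ⟨w 1, ?_⟩
    funext i
    fin_cases i
    · simp only [Matrix.cons_val_zero, Pi.smul_apply, smul_eq_mul]
      show w 0 = w 1 * (1 / (2 * x))
      field_simp at h0 ⊢
      linarith
    · simp
  · funext i
    fin_cases i <;>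
      simp [Matrix.mulVec, dotProduct, Fin.sum_univ_two] <;> field_simp <;> ring
end

section
/- Let x, y > 0 with 2x⁵ + x³y − y³ ≠ 0, and define α(x,y) = (−2x⁵ + y³ − x³y)/(2x⁴) and ε(x,y) = 2x⁴(x² − y)/(2x⁵ + x³y − y³). Then the determinant of the Jacobian matrix of the map (x,y) ↦ (α(x,y), ε(x,y)), i.e. (∂α/∂x)(∂ε/∂y) − (∂α/∂y)(∂ε/∂x), equals (4x⁵ − x³y − 6x²y² + 4y³)/(x(2x⁵ + x³y − y³)). -/
/-- The Jacobian determinant of the map `(x,y) ↦ (α(x,y), ε(x,y))` arising in the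
Bogdanov–Takens construction. -/
theorem stmt16 (x y : ℝ) (hx : 0 < x) (hy : 0 < y) (hden : 2*x^5 + x^3*y - y^3 ≠ 0)
    (α ε : ℝ → ℝ → ℝ)
    (hα : α = fun x y => (-2*x^5 + y^3 - x^3*y)/(2*x^4))
    (hε : ε = fun x y => 2*x^4*(x^2 - y)/(2*x^5 + x^3*y - y^3)) :
    deriv (fun x' => α x' y) x * deriv (fun y' => ε x y') y -
      deriv (fun y' => α x y') y * deriv (fun x' => ε x' y) x =
    (4*x^5 - x^3*y - 6*x^2*y^2 + 4*y^3)/(x*(2*x^5 + x^3*y - y^3)) := by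
  subst hα hε
  beta_reduce
  have hx0 : x ≠ 0 := ne_of_gt hx
  have hx4 : (2*x^4 : ℝ) ≠ 0 := by positivity
  have h1 := ((((hasDerivAt_pow 5 x).const_mul (-2:ℝ)).add_const (y^3)).sub
      ((hasDerivAt_pow 3 x).mul_const y)).div ((hasDerivAt_pow 4 x).const_mul 2) hx4
  have h2 := (((hasDerivAt_id y).const_sub (x^2)).const_mul (2*x^4)).div
      ((((hasDerivAt_id y).const_mul (x^3)).const_add (2*x^5)).sub (hasDerivAt_pow 3 y)) hden
  have h3 := (((hasDerivAt_pow 3 y).const_add (-2*x^5)).sub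
      ((hasDerivAt_id y).const_mul (x^3))).div_const (2*x^4)
  have h4 := ((((hasDerivAt_pow 4 x).const_mul (2:ℝ)).mul ((hasDerivAt_pow 2 x).sub_const y)).div
      ((((hasDerivAt_pow 5 x).const_mul (2:ℝ)).add ((hasDerivAt_pow 3 x).mul_const y)).sub_const (y^3))) hden
  rw [show (fun x' : ℝ => (-2*x'^5 + y^3 - x'^3*y)/(2*x'^4))
        = fun x' : ℝ => ((-2)*x'^5 + y^3 - x'^3*y)/(2*x'^4) from rfl,
      show deriv (fun x' : ℝ => ((-2)*x'^5 + y^3 - x'^3*y)/(2*x'^4)) x = _ from h1.deriv]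
  rw [show (fun y' : ℝ => 2*x^4*(x^2 - y')/(2*x^5 + x^3*y' - y'^3))
        = fun y' : ℝ => 2*x^4*(x^2 - id y')/(2*x^5 + x^3*(id y') - y'^3) from rfl,
      show deriv (fun y' : ℝ => 2*x^4*(x^2 - id y')/(2*x^5 + x^3*(id y') - y'^3)) y = _ from h2.deriv]
  rw [show (fun y' : ℝ => (-2*x^5 + y'^3 - x^3*y')/(2*x^4))
        = fun y' : ℝ => ((-2*x^5) + y'^3 - x^3*(id y'))/(2*x^4) from rfl,
      show deriv (fun y' : ℝ => ((-2*x^5) + y'^3 - x^3*(id y'))/(2*x^4)) y = _ from h3.deriv]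
  rw [show (fun x' : ℝ => 2*x'^4*(x'^2 - y)/(2*x'^5 + x'^3*y - y^3))
        = fun x' : ℝ => (2*x'^4)*(x'^2 - y)/((2*x'^5 + x'^3*y) - y^3) from rfl,
      show deriv (fun x' : ℝ => (2*x'^4)*(x'^2 - y)/((2*x'^5 + x'^3*y) - y^3)) x = _ from h4.deriv]
  simp only [Pi.add_apply, Pi.sub_apply, Pi.mul_apply, Pi.div_apply, id]
  push_cast
  rw [div_mul_div_comm, div_mul_div_comm, div_sub_div _ _ (by simp [hx0, hden]) (by simp [hx0, hden]),
    div_eq_div_iff (by simp [hx0, hden]) (by simp [hx0, hden])]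
  ring
end

section
/- Let x, y > 0 and define F(x,y,b,K) = −2Kx⁵ − 9xy + by² + 2bKx²y² + bK²x⁴y² + x³(10 + Ky). Then substituting b = b* := (−2x⁵ + y³)/(2x⁵) and K = K* := (2x³ − y²)/(x²y²) yields F(x,y,b*,K*) = −(2x/y²)·(4x⁵ − x³y − 6x²y² + 4y³). In particular, if 4x⁵ − x³y − 6x²y² + 4y³ ≠ 0 then F(x,y,b*,K*) ≠ 0. -/
/-- Evaluation of `F` at the Bogdanov–Takens parameter values `b*`, `K*`. -/
theorem stmt18 (x y : ℝ) (hx : 0 < x) (hy : 0 < y)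
    (F : ℝ → ℝ → ℝ → ℝ → ℝ)
    (hF : F = fun x y b K =>
      -2*K*x^5 - 9*x*y + b*y^2 + 2*b*K*x^2*y^2 + b*K^2*x^4*y^2 + x^3*(10 + K*y))
    (bs Ks : ℝ)
    (hbs : bs = (-2*x^5 + y^3)/(2*x^5)) (hKs : Ks = (2*x^3 - y^2)/(x^2*y^2)) :
    F x y bs Ks = -(2*x/y^2) * (4*x^5 - x^3*y - 6*x^2*y^2 + 4*y^3) ∧
    (4*x^5 - x^3*y - 6*x^2*y^2 + 4*y^3 ≠ 0 → F x y bs Ks ≠ 0) := by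
  have hx0 : x ≠ 0 := hx.ne'
  have hy0 : y ≠ 0 := hy.ne'
  have h : F x y bs Ks = -(2*x/y^2) * (4*x^5 - x^3*y - 6*x^2*y^2 + 4*y^3) := by
    subst hF hbs hKs
    field_simp
    ring
  refine ⟨h, fun hne => ?_⟩
  rw [h]
  have : -(2*x/y^2) ≠ 0 := by
    simp only [neg_ne_zero]
    positivity
  exact mul_ne_zero this hne
end

section
/- Let U, V > 0 and define a₂₀ = (1/(4U¹⁰V))·(8U¹⁰ − 16U¹¹ + 4U⁹V − 4U⁵V³ + 8U⁶V³ − 3U³V⁴ + 6U⁴V⁴ + 2V⁶ − 4UV⁶) and b₁₁ = (1/(2U⁹V))·(−4U⁹ + 8U¹⁰ − 2U⁸V + U⁴V³) − (1/(2U⁹V))·(4U⁵V³ + 3U³V⁴ − 2V⁶). Then a₂₀ + b₁₁ = −V²·(2U⁵ + 3U³V − 2V³)/(4U¹⁰). In particular, if G₂ := 2U⁵ + 3U³V − 2V³ ≠ 0 then a₂₀ + b₁₁ ≠ 0. -/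
/-- The genericity quantity of the Bogdanov–Takens normal form:
`a₂₀ + b₁₁ = −V²(2U⁵ + 3U³V − 2V³)/(4U¹⁰)`. -/
theorem stmt19 (U V : ℝ) (hU : 0 < U) (hV : 0 < V)
    (a20 b11 : ℝ)
    (ha20 : a20 = (1/(4*U^10*V)) *
      (8*U^10 - 16*U^11 + 4*U^9*V - 4*U^5*V^3 + 8*U^6*V^3 - 3*U^3*V^4 + 6*U^4*V^4
        + 2*V^6 - 4*U*V^6))
    (hb11 : b11 = (1/(2*U^9*V)) * (-4*U^9 + 8*U^10 - 2*U^8*V + U^4*V^3)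
      - (1/(2*U^9*V)) * (4*U^5*V^3 + 3*U^3*V^4 - 2*V^6)) :
    a20 + b11 = -V^2 * (2*U^5 + 3*U^3*V - 2*V^3)/(4*U^10) ∧
    (2*U^5 + 3*U^3*V - 2*V^3 ≠ 0 → a20 + b11 ≠ 0) := by
  have hU0 : U ≠ 0 := ne_of_gt hU
  have hV0 : V ≠ 0 := ne_of_gt hV
  have key : a20 + b11 = -V^2 * (2*U^5 + 3*U^3*V - 2*V^3)/(4*U^10) := by
    subst ha20 hb11
    field_simp
    ring
  refine ⟨key, fun hG => ?_⟩
  rw [key]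
  intro h
  apply hG
  have h4 : (4:ℝ)*U^10 ≠ 0 := by positivity
  have := (div_eq_zero_iff.mp h).resolve_right h4
  have hV2 : -V^2 ≠ 0 := neg_ne_zero.mpr (pow_ne_zero 2 hV0)
  exact (mul_eq_zero.mp this).resolve_left hV2
end
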